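/- In the layer-product popping process, if (u',v') is a layer product whose minimum tuple has been popped but whose maximum tuple has not been popped by the end of phase 1, then u' = 1, or v' = 1, or the maximum tuple ⌈(u'−1,v'−1)⌉ was popped during phase 1. -/

import Mathlib

/-- A tuple in the priority queue: (value, layer-product index (u,v), isMax flag). -/
abbrev Tup := ℝ × (ℕ × ℕ) × Bool

/-- Lexicographic order on index pairs. -/
def idxLt (a b : ℕ × ℕ) : Prop := a.1 < b.1 ∨ (a.1 = b.1 ∧ a.2 < b.2)

/-- Lexicographic order on tuples (value, index, flag), with false < true. -/
def tupLt (a b : Tup) : Prop :=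
  a.1 < b.1 ∨ (a.1 = b.1 ∧ (idxLt a.2.1 b.2.1 ∨ (a.2.1 = b.2.1 ∧ a.2.2 < b.2.2)))

/-- ⌊(u,v)⌋ : the minimum tuple of layer product (u,v). -/
def floorT (lo : ℕ × ℕ → ℝ) (uv : ℕ × ℕ) : Tup := (lo uv, uv, false)

/-- ⌈(u,v)⌉ : the maximum tuple of layer product (u,v). -/
def ceilT (hi : ℕ × ℕ → ℝ) (uv : ℕ × ℕ) : Tup := (hi uv, uv, true)

/-- Tuples inserted when a tuple is popped: popping ⌊(u,v)⌋ inserts ⌈(u,v)⌉,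
⌊(u+1,v)⌋ and ⌊(u,v+1)⌋ (when in range 1..p × 1..q); popping ⌈(u,v)⌉ inserts
nothing. -/
noncomputable def succs (p q : ℕ) (lo hi : ℕ × ℕ → ℝ) (t : Tup) : Finset Tup :=
  if t.2.2 = true then ∅
  else
    {ceilT hi t.2.1}
      ∪ (if t.2.1.1 + 1 ≤ p then {floorT lo (t.2.1.1 + 1, t.2.1.2)} else ∅)
      ∪ (if t.2.1.2 + 1 ≤ q then {floorT lo (t.2.1.1, t.2.1.2 + 1)} else ∅)

/-- A run of the layer-product popping process: `H t` is the heap content before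
the `t`-th pop, `pop t` is the tuple popped at time `t`, and `N` is the number of
pops performed.  The heap starts with ⌊(1,1)⌋, each pop removes a minimum tuple
and inserts its successors, avoiding duplicates of already-popped tuples. -/
structure Run (p q : ℕ) (lo hi : ℕ × ℕ → ℝ) where
  N : ℕ
  H : ℕ → Finset Tup
  pop : ℕ → Tup
  init : H 0 = {floorT lo (1, 1)}
  mem : ∀ t < N, pop t ∈ H t
  isMin : ∀ t < N, ∀ x ∈ H t, ¬ tupLt x (pop t)
  step : ∀ t < N, H (t + 1) =
    ((H t).erase (pop t)) ∪
      ((succs p q lo hi (pop t)) \ ((Finset.range (t + 1)).image pop))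

/-- Persistence: an element in the heap remains there until it is popped. -/
lemma run_persist {p q : ℕ} {lo hi : ℕ × ℕ → ℝ} (r : Run p q lo hi) :
    ∀ t', t' ≤ r.N → ∀ t, t ≤ t' → ∀ x ∈ r.H t,
      (∃ s, t ≤ s ∧ s < t' ∧ r.pop s = x) ∨ x ∈ r.H t' := by
  intro t'
  induction t' with
  | zero =>
    intro _ t ht x hx
    have : t = 0 := Nat.le_zero.mp ht
    subst this; exact Or.inr hx
  | succ n ih =>
    intro hN t ht x hx
    by_cases h : t = n + 1
    · subst h; exact Or.inr hx
    · have ht' : t ≤ n := by omega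
      have hnN : n < r.N := by omega
      rcases ih (by omega) t ht' x hx with ⟨s, h1, h2, h3⟩ | hmem
      · exact Or.inl ⟨s, h1, by omega, h3⟩
      · by_cases hpe : r.pop n = x
        · exact Or.inl ⟨n, ht', by omega, hpe⟩
        · right
          rw [r.step n hnN]
          exact Finset.mem_union_left _
            (Finset.mem_erase.2 ⟨fun hh => hpe hh.symm, hmem⟩)

/-- Indices of heap elements are in [1,p] × [1,q]. -/
lemma run_bounds {p q : ℕ} {lo hi : ℕ × ℕ → ℝ} (hp : 1 ≤ p) (hq : 1 ≤ q)
    (r : Run p q lo hi) :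
    ∀ t, t ≤ r.N → ∀ x ∈ r.H t,
      1 ≤ x.2.1.1 ∧ x.2.1.1 ≤ p ∧ 1 ≤ x.2.1.2 ∧ x.2.1.2 ≤ q := by
  intro t
  induction t with
  | zero =>
    intro _ x hx
    rw [r.init] at hx
    simp only [Finset.mem_singleton] at hx
    subst hx
    simp [floorT, hp, hq]
  | succ n ih =>
    intro hN x hx
    have hnN : n < r.N := by omega
    rw [r.step n hnN] at hx
    rcases Finset.mem_union.1 hx with hx | hx
    · exact ih (by omega) x (Finset.mem_erase.1 hx).2
    · have hx' : x ∈ succs p q lo hi (r.pop n) := (Finset.mem_sdiff.1 hx).1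
      have hb := ih (by omega) (r.pop n) (r.mem n hnN)
      unfold succs at hx'
      by_cases hfl : (r.pop n).2.2 = true
      · simp [hfl] at hx'
      · rw [if_neg hfl] at hx'
        rcases Finset.mem_union.1 hx' with hx' | hx'
        · rcases Finset.mem_union.1 hx' with hx' | hx'
          · simp only [Finset.mem_singleton] at hx'
            subst hx'; simpa [ceilT] using hb
          · by_cases hc : (r.pop n).2.1.1 + 1 ≤ p
            · rw [if_pos hc] at hx'
              simp only [Finset.mem_singleton] at hx'
              subst hx'
              simp only [floorT]
              exact ⟨by omega, hc, hb.2.2⟩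
            · rw [if_neg hc] at hx'; simp at hx'
        · by_cases hc : (r.pop n).2.1.2 + 1 ≤ q
          · rw [if_pos hc] at hx'
            simp only [Finset.mem_singleton] at hx'
            subst hx'
            simp only [floorT]
            exact ⟨hb.1, hb.2.1, by omega, hc⟩
          · rw [if_neg hc] at hx'; simp at hx'

/-- A successor of a pop is eventually popped-or-present. -/
lemma run_succ_mem {p q : ℕ} {lo hi : ℕ × ℕ → ℝ} (r : Run p q lo hi)
    {s : ℕ} (hs : s < r.N) {x : Tup} (hx : x ∈ succs p q lo hi (r.pop s)) :
    (∃ s' ≤ s, r.pop s' = x) ∨ x ∈ r.H (s + 1) := by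
  by_cases hpop : x ∈ (Finset.range (s + 1)).image r.pop
  · rcases Finset.mem_image.1 hpop with ⟨s', hs', he⟩
    exact Or.inl ⟨s', by simpa using Nat.lt_succ_iff.mp (Finset.mem_range.1 hs'), he⟩
  · right
    rw [r.step s hs]
    exact Finset.mem_union_right _ (Finset.mem_sdiff.2 ⟨hx, hpop⟩)

/-- If by the end of phase 1 (time N1) the minimum tuple of layer
product (u',v') has been popped but its maximum tuple has not, then u' = 1, or
v' = 1, or the maximum tuple ⌈(u'−1,v'−1)⌉ was popped during phase 1. -/
theorem pending_max_has_diag_predecessor (p q : ℕ) (hp : 1 ≤ p) (hq : 1 ≤ q)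
    (X Y : ℕ → Finset ℝ)
    (hXne : ∀ u, (X u).Nonempty) (hYne : ∀ v, (Y v).Nonempty)
    (hXord : ∀ u v, u < v → ∀ a ∈ X u, ∀ b ∈ X v, a ≤ b)
    (hYord : ∀ u v, u < v → ∀ a ∈ Y u, ∀ b ∈ Y v, a ≤ b)
    (lo hi : ℕ × ℕ → ℝ)
    (hlo : ∀ uv : ℕ × ℕ, lo uv = (X uv.1).min' (hXne uv.1) + (Y uv.2).min' (hYne uv.2))
    (hhi : ∀ uv : ℕ × ℕ, hi uv = (X uv.1).max' (hXne uv.1) + (Y uv.2).max' (hYne uv.2))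
    (r : Run p q lo hi) (N1 : ℕ) (hN1 : N1 ≤ r.N) (u' v' : ℕ)
    (hmin : ∃ t < N1, r.pop t = floorT lo (u', v'))
    (hmax : ¬ ∃ t < N1, r.pop t = ceilT hi (u', v')) :
    u' = 1 ∨ v' = 1 ∨ ∃ t < N1, r.pop t = ceilT hi (u' - 1, v' - 1) := by
  by_cases hu1 : u' = 1
  · exact Or.inl hu1
  by_cases hv1 : v' = 1
  · exact Or.inr (Or.inl hv1)
  obtain ⟨t0, ht0, hpop0⟩ := hmin
  have ht0N : t0 < r.N := lt_of_lt_of_le ht0 hN1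
  have hmem0 : floorT lo (u', v') ∈ r.H t0 := hpop0 ▸ r.mem t0 ht0N
  have hb := run_bounds hp hq r t0 (le_of_lt ht0N) _ hmem0
  simp only [floorT] at hb
  have hu2 : 2 ≤ u' := by omega
  have hv2 : 2 ≤ v' := by omega
  have hup : u' ≤ p := hb.2.1
  have hvq : v' ≤ q := hb.2.2.2
  -- monotonicity of lo
  have hloMono : ∀ a b : ℕ, a ≤ u' → b ≤ v' → lo (a, b) ≤ lo (u', v') := by
    intro a b ha hb'
    rw [hlo, hlo]
    have h1 : (X a).min' (hXne a) ≤ (X u').min' (hXne u') := by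
      rcases lt_or_eq_of_le ha with h | h
      · exact hXord a u' h _ (Finset.min'_mem _ _) _ (Finset.min'_mem _ _)
      · subst h; exact le_refl _
    have h2 : (Y b).min' (hYne b) ≤ (Y v').min' (hYne v') := by
      rcases lt_or_eq_of_le hb' with h | h
      · exact hYord b v' h _ (Finset.min'_mem _ _) _ (Finset.min'_mem _ _)
      · subst h; exact le_refl _
    exact add_le_add h1 h2
  -- strict tuple order of smaller floors
  have hfloorLt : ∀ a b : ℕ, a ≤ u' → b ≤ v' → (a, b) ≠ (u', v') →
      tupLt (floorT lo (a, b)) (floorT lo (u', v')) := by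
    intro a b ha hb' hne
    have hle := hloMono a b ha hb'
    simp only [tupLt, floorT, idxLt]
    rcases lt_or_eq_of_le hle with h | h
    · exact Or.inl h
    · refine Or.inr ⟨h, Or.inl ?_⟩
      rcases lt_or_eq_of_le ha with h' | h'
      · exact Or.inl h'
      · refine Or.inr ⟨h', ?_⟩
        have hbne : b ≠ v' := fun hh => hne (by rw [h', hh])
        omega
  -- the diagonal ceiling is below the floor of (u',v')
  have hceilLt : tupLt (ceilT hi (u' - 1, v' - 1)) (floorT lo (u', v')) := by
    have h1 : (X (u' - 1)).max' (hXne _) ≤ (X u').min' (hXne _) :=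
      hXord (u' - 1) u' (by omega) _ (Finset.max'_mem _ _) _ (Finset.min'_mem _ _)
    have h2 : (Y (v' - 1)).max' (hYne _) ≤ (Y v').min' (hYne _) :=
      hYord (v' - 1) v' (by omega) _ (Finset.max'_mem _ _) _ (Finset.min'_mem _ _)
    have hle : hi (u' - 1, v' - 1) ≤ lo (u', v') := by
      rw [hhi, hlo]; exact add_le_add h1 h2
    simp only [tupLt, ceilT, floorT, idxLt]
    rcases lt_or_eq_of_le hle with h | h
    · exact Or.inl h
    · exact Or.inr ⟨h, Or.inl (Or.inl (by omega))⟩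
  -- anything in the heap that is smaller than pop t0 gets popped before t0
  have hforce : ∀ x : Tup, tupLt x (floorT lo (u', v')) → ∀ s, s ≤ t0 → x ∈ r.H s →
      ∃ s', s' < t0 ∧ r.pop s' = x := by
    intro x hxlt s hs hxmem
    rcases run_persist r t0 (le_of_lt ht0N) s hs x hxmem with ⟨s', _, h2, h3⟩ | hmem
    · exact ⟨s', h2, h3⟩
    · exact absurd (by rw [hpop0]; exact hxlt) (r.isMin t0 ht0N x hmem)
  -- every floor (a,b) componentwise below (u',v') is popped before t0
  have key : ∀ n a b : ℕ, a + b = n → 1 ≤ a → a ≤ u' → 1 ≤ b → b ≤ v' →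
      (a, b) ≠ (u', v') → ∃ s < t0, r.pop s = floorT lo (a, b) := by
    intro n
    induction n using Nat.strong_induction_on with
    | _ n ih =>
      intro a b hab ha1 hau hb1 hbv hne
      by_cases hone : a = 1 ∧ b = 1
      · obtain ⟨ha, hb'⟩ := hone; subst ha; subst hb'
        have hmem : floorT lo (1, 1) ∈ r.H 0 := by
          rw [r.init]; exact Finset.mem_singleton_self _
        obtain ⟨s', h2, h3⟩ :=
          hforce _ (hfloorLt 1 1 hau hbv hne) 0 (Nat.zero_le _) hmem
        exact ⟨s', h2, h3⟩
      · by_cases ha2 : 2 ≤ a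
        · obtain ⟨s, hs, hps⟩ := ih (a - 1 + b) (by omega) (a - 1) b rfl
            (by omega) (by omega) hb1 hbv
            (by simp only [ne_eq, Prod.mk.injEq, not_and]; intro hh; omega)
          have hsN : s < r.N := by omega
          have hin : floorT lo (a, b) ∈ succs p q lo hi (r.pop s) := by
            rw [hps]
            have hrw : a - 1 + 1 = a := by omega
            have hap : a ≤ p := by omega
            simp [succs, floorT, hrw, hap]
          rcases run_succ_mem r hsN hin with ⟨s', hs', he⟩ | hmem
          · exact ⟨s', by omega, he⟩
          · obtain ⟨s', h2, h3⟩ :=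
              hforce _ (hfloorLt a b hau hbv hne) (s + 1) (by omega) hmem
            exact ⟨s', h2, h3⟩
        · have hb2 : 2 ≤ b := by omega
          obtain ⟨s, hs, hps⟩ := ih (a + (b - 1)) (by omega) a (b - 1) rfl
            ha1 hau (by omega) (by omega)
            (by simp only [ne_eq, Prod.mk.injEq, not_and]; intro _ ; omega)
          have hsN : s < r.N := by omega
          have hin : floorT lo (a, b) ∈ succs p q lo hi (r.pop s) := by
            rw [hps]
            have hrw : b - 1 + 1 = b := by omega
            have hbq : b ≤ q := by omega
            simp [succs, floorT, hrw, hbq]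
          rcases run_succ_mem r hsN hin with ⟨s', hs', he⟩ | hmem
          · exact ⟨s', by omega, he⟩
          · obtain ⟨s', h2, h3⟩ :=
              hforce _ (hfloorLt a b hau hbv hne) (s + 1) (by omega) hmem
            exact ⟨s', h2, h3⟩
  -- apply to (u'-1, v'-1)
  obtain ⟨s, hs, hps⟩ := key (u' - 1 + (v' - 1)) (u' - 1) (v' - 1) rfl
    (by omega) (by omega) (by omega) (by omega)
    (by simp only [ne_eq, Prod.mk.injEq, not_and]; intro hh; omega)
  have hsN : s < r.N := by omega
  have hin : ceilT hi (u' - 1, v' - 1) ∈ succs p q lo hi (r.pop s) := by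
    rw [hps]
    simp [succs, floorT, ceilT]
  rcases run_succ_mem r hsN hin with ⟨s', hs', he⟩ | hmem
  · exact Or.inr (Or.inr ⟨s', by omega, he⟩)
  · obtain ⟨s', h2, h3⟩ := hforce _ hceilLt (s + 1) (by omega) hmem
    exact Or.inr (Or.inr ⟨s', by omega, h3⟩)
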